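/- Let I ⊆ [0,1] be a set of real numbers and let c ≥ 0 be a real number. Then D_c(D_c(I)) ⊆ D_c(I) ∪ {1}. -/

import Mathlib

open Finset in
/-- `I_+`: sums `∑ nᵢ aᵢ ≤ 1` with `aᵢ ∈ I`, `nᵢ` positive integers, together with `0`. -/
def Iplus (I : Set ℝ) : Set ℝ :=
  {x : ℝ | x ≤ 1 ∧ ∃ (r : ℕ), 0 < r ∧ ∃ (a : Fin r → ℝ) (n : Fin r → ℕ),
    (∀ i, a i ∈ I) ∧ (∀ i, 0 < n i) ∧ x = ∑ i, (n i : ℝ) * a i} ∪ {0}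

/-- `D(I) = {(m-1+f)/m ≤ 1 : m ∈ ℕ₊, f ∈ I_+}`. -/
def Dset (I : Set ℝ) : Set ℝ :=
  {x : ℝ | ∃ (m : ℕ) (f : ℝ), 0 < m ∧ f ∈ Iplus I ∧ x = ((m : ℝ) - 1 + f) / m} ∩ Set.Iic 1

/-- `D_c(I) = {(m-1+f+kc)/m ≤ 1 : m, k ∈ ℕ₊, f ∈ I_+}`. -/
def Dc (c : ℝ) (I : Set ℝ) : Set ℝ :=
  {x : ℝ | ∃ (m k : ℕ) (f : ℝ), 0 < m ∧ 0 < k ∧ f ∈ Iplus I ∧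
    x = ((m : ℝ) - 1 + f + (k : ℝ) * c) / m} ∩ Set.Iic 1

open Finset

lemma Iplus_subset_closure {I : Set ℝ} : Iplus I ⊆ (AddSubmonoid.closure I : Set ℝ) := by
  rintro x (⟨-, r, -, a, n, ha, -, rfl⟩ | rfl)
  · refine AddSubmonoid.sum_mem _ (fun i _ => ?_)
    rw [← nsmul_eq_mul]
    exact nsmul_mem (AddSubmonoid.subset_closure (ha i)) (n i)
  · exact zero_mem _

lemma Iplus_nonneg {I : Set ℝ} (hI : I ⊆ Set.Icc 0 1) {x : ℝ} (hx : x ∈ Iplus I) : 0 ≤ x := by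
  have hx' := Iplus_subset_closure hx
  clear hx
  induction hx' using AddSubmonoid.closure_induction with
  | mem y hy => exact (hI hy).1
  | zero => exact le_rfl
  | add y z _ _ hy hz => exact add_nonneg hy hz

lemma mem_Iplus_of_closure {I : Set ℝ} {x : ℝ} (hx : x ∈ AddSubmonoid.closure I)
    (hx1 : x ≤ 1) : x ∈ Iplus I := by
  obtain ⟨l, hl, hsum⟩ := AddSubmonoid.exists_list_of_mem_closure hx
  match l, hl, hsum with
  | [], _, hsum => exact Or.inr (by simp [← hsum])
  | (b :: t), hl, hsum =>
    refine Or.inl ⟨hx1, (b :: t).length, by simp, (b :: t).get, fun _ => 1,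
      fun i => hl _ (List.get_mem _ i), fun _ => one_pos, ?_⟩
    have h1 : (List.ofFn (b :: t).get).sum = ∑ i, (b :: t).get i := List.sum_ofFn
    rw [List.ofFn_get] at h1
    rw [← hsum, h1]
    simp

lemma sum_one_sub_inv_le {ι : Type*} (s : Finset ι) (g : ι → ℝ) (hg : ∀ i ∈ s, 1 ≤ g i) :
    1 - (∏ i ∈ s, g i)⁻¹ ≤ ∑ i ∈ s, (1 - (g i)⁻¹) := by
  induction s using Finset.cons_induction_on with
  | empty => simp
  | cons a t hat ih =>
    have ha : 1 ≤ g a := hg a (Finset.mem_cons_self a t)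
    have ht : ∀ i ∈ t, 1 ≤ g i := fun i hi => hg i (Finset.mem_cons_of_mem hi)
    have hpt : 1 ≤ ∏ i ∈ t, g i := by
      calc (1:ℝ) = ∏ _i ∈ t, (1:ℝ) := by simp
        _ ≤ ∏ i ∈ t, g i := Finset.prod_le_prod (by norm_num) ht
    have iht := ih ht
    rw [Finset.prod_cons, Finset.sum_cons, mul_inv]
    have h1 : 0 ≤ 1 - (g a)⁻¹ := by
      rw [sub_nonneg]; exact inv_le_one_of_one_le₀ ha
    have h2 : 0 ≤ 1 - (∏ i ∈ t, g i)⁻¹ := by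
      rw [sub_nonneg]; exact inv_le_one_of_one_le₀ hpt
    nlinarith [mul_nonneg h1 h2]

theorem Dc_of_Dc (I : Set ℝ) (hI : I ⊆ Set.Icc 0 1) (c : ℝ) (hc : 0 ≤ c) :
    Dc c (Dc c I) ⊆ Dc c I ∪ {1} := by
  rintro x ⟨⟨m, k, f, hm, hk, hf, hxeq⟩, hx1⟩
  rcases hf with ⟨hf1, r, -, b, n, hb, hn, rfl⟩ | rfl
  swap
  · exact Or.inl ⟨⟨m, k, 0, hm, hk, Or.inr rfl, hxeq⟩, hx1⟩
  · choose mm kk ff hmm hkk hff hbeq using fun i => (hb i).1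
    have hble : ∀ i, b i ≤ 1 := fun i => (hb i).2
    set P : ℕ := ∏ i, mm i with hPdef
    set q : Fin r → ℕ := fun i => ∏ j ∈ univ.erase i, mm j with hqdef
    have hP : 0 < P := Finset.prod_pos (fun i _ => hmm i)
    have hq : ∀ i, 0 < q i := fun i => Finset.prod_pos (fun j _ => hmm j)
    have hqm : ∀ i, q i * mm i = P := fun i => Finset.prod_erase_mul _ _ (mem_univ i)
    have hcast : ∀ i, (q i : ℝ) * (mm i : ℝ) = (P : ℝ) := fun i => by exact_mod_cast hqm i
    set S : ℕ := ∑ i, n i * q i * (mm i - 1) with hSdef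
    set L : ℕ := ∑ i, n i * q i * kk i with hLdef
    set K : ℕ := P * k + L with hKdef
    set M : ℕ := m * P with hMdef
    set F : ℝ := ∑ i, (n i : ℝ) * (q i : ℝ) * ff i with hFdef
    have hM : 0 < M := Nat.mul_pos hm hP
    have hM0 : (M : ℝ) ≠ 0 := by positivity
    have hm0 : (m : ℝ) ≠ 0 := by positivity
    -- m_i * b_i = m_i - 1 + f_i + k_i c
    have hMb : ∀ i, (mm i : ℝ) * b i = (mm i : ℝ) - 1 + ff i + (kk i : ℝ) * c := by
      intro i
      have h0 : (mm i : ℝ) ≠ 0 := by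
        have := hmm i; positivity
      rw [hbeq i, mul_div_cancel₀ _ h0]
    have hb' : ∀ i, (P : ℝ) * b i = (q i : ℝ) * ((mm i : ℝ) - 1 + ff i + (kk i : ℝ) * c) := by
      intro i
      rw [← hcast i, mul_assoc, hMb i]
    -- cast of S
    have hScast : (S : ℝ) = ∑ i, (n i : ℝ) * (q i : ℝ) * ((mm i : ℝ) - 1) := by
      rw [hSdef, Nat.cast_sum]
      refine Finset.sum_congr rfl (fun i _ => ?_)
      rw [Nat.cast_mul, Nat.cast_mul, Nat.cast_sub (hmm i)]
      push_cast
      ring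
    -- main identity
    have hmx : (m : ℝ) * x = (m : ℝ) - 1 + (∑ i, (n i : ℝ) * b i) + (k : ℝ) * c := by
      rw [hxeq, mul_div_cancel₀ _ hm0]
    have hMcast : (M : ℝ) = (m : ℝ) * (P : ℝ) := by rw [hMdef]; push_cast; ring
    have hKcast : (K : ℝ) = (P : ℝ) * (k : ℝ) + (L : ℝ) := by rw [hKdef]; push_cast; ring
    have hLcast : (L : ℝ) = ∑ i, (n i : ℝ) * (q i : ℝ) * (kk i : ℝ) := by
      rw [hLdef]; push_cast; ring
    have esum : (P : ℝ) * (∑ i, (n i : ℝ) * b i)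
        = (S : ℝ) + F + (∑ i, (n i : ℝ) * (q i : ℝ) * (kk i : ℝ)) * c := by
      rw [Finset.mul_sum, hScast, hFdef, Finset.sum_mul, ← Finset.sum_add_distrib,
        ← Finset.sum_add_distrib]
      refine Finset.sum_congr rfl (fun i _ => ?_)
      linear_combination (n i : ℝ) * hb' i
    have hMx : (M : ℝ) * x = (M : ℝ) - 1 + ((S : ℝ) - (P : ℝ) + 1) + F + (K : ℝ) * c := by
      rw [hMcast, hKcast, hLcast]
      linear_combination (P : ℝ) * hmx + esum
    -- S ≥ P - 1
    have hSP : (P : ℝ) - 1 ≤ (S : ℝ) := by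
      have h1 : ∀ i ∈ univ, (q i : ℝ) * ((mm i : ℝ) - 1) = (P : ℝ) * (1 - ((mm i : ℝ))⁻¹) := by
        intro i _
        have h0 : (mm i : ℝ) ≠ 0 := by have := hmm i; positivity
        field_simp
        linear_combination ((mm i : ℝ) - 1) * hcast i
      have h2 : ∑ i, (q i : ℝ) * ((mm i : ℝ) - 1)
          = (P : ℝ) * ∑ i, (1 - ((mm i : ℝ))⁻¹) := by
        rw [Finset.sum_congr rfl h1, Finset.mul_sum]
      have h3 : 1 - ((P : ℝ))⁻¹ ≤ ∑ i, (1 - ((mm i : ℝ))⁻¹) := by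
        have := sum_one_sub_inv_le univ (fun i => (mm i : ℝ))
          (fun i _ => by show (1:ℝ) ≤ (mm i : ℝ); exact_mod_cast hmm i)
        have hPP : (∏ i, (mm i : ℝ)) = (P : ℝ) := by rw [hPdef]; push_cast; ring
        rwa [hPP] at this
      have h4 : (P : ℝ) - 1 ≤ ∑ i, (q i : ℝ) * ((mm i : ℝ) - 1) := by
        rw [h2]
        have hP0 : (0 : ℝ) < (P : ℝ) := by exact_mod_cast hP
        have := mul_le_mul_of_nonneg_left h3 (le_of_lt hP0)
        calc (P : ℝ) - 1 = (P : ℝ) * (1 - ((P : ℝ))⁻¹) := by field_simp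
          _ ≤ _ := this
      refine h4.trans ?_
      rw [hScast]
      refine Finset.sum_le_sum (fun i _ => ?_)
      have hn1 : (1 : ℝ) ≤ (n i : ℝ) := by exact_mod_cast hn i
      have hq0 : (0 : ℝ) ≤ (q i : ℝ) := by positivity
      have hmm1 : (0 : ℝ) ≤ (mm i : ℝ) - 1 := by
        have : (1 : ℝ) ≤ (mm i : ℝ) := by exact_mod_cast hmm i
        linarith
      nlinarith [mul_le_mul_of_nonneg_right hn1 (mul_nonneg hq0 hmm1)]
    have hPS : P ≤ S + 1 := by
      have : (P : ℝ) ≤ (S : ℝ) + 1 := by linarith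
      exact_mod_cast this
    set u : ℕ := S + 1 - P with hudef
    have hu : (u : ℝ) = (S : ℝ) + 1 - (P : ℝ) := by
      rw [hudef, Nat.cast_sub hPS]; push_cast; ring
    -- nonnegativity facts
    have hff0 : ∀ i, 0 ≤ ff i := fun i => Iplus_nonneg hI (hff i)
    have hF0 : 0 ≤ F := by
      rw [hFdef]
      refine Finset.sum_nonneg (fun i _ => ?_)
      have : (0:ℝ) ≤ (n i : ℝ) * (q i : ℝ) := by positivity
      exact mul_nonneg this (hff0 i)
    have hKc0 : 0 ≤ (K : ℝ) * c := by positivity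
    -- from x ≤ 1
    have hbound : (u : ℝ) + F + (K : ℝ) * c ≤ 1 := by
      have hMR : (0 : ℝ) < (M : ℝ) := by exact_mod_cast hM
      have : (M : ℝ) * x ≤ (M : ℝ) * 1 := mul_le_mul_of_nonneg_left hx1 (le_of_lt hMR)
      rw [mul_one] at this
      rw [hMx] at this
      rw [hu]
      linarith
    rcases Nat.eq_zero_or_pos u with hu0 | hu1
    · -- x ∈ Dc c I
      have hSP1 : (S : ℝ) - (P : ℝ) + 1 = 0 := by
        rw [hu0] at hu; push_cast at hu; linarith
      have hxeq' : x = ((M : ℝ) - 1 + F + (K : ℝ) * c) / M := by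
        rw [eq_div_iff hM0]
        rw [hSP1] at hMx
        linarith [hMx]
      have hF1 : F ≤ 1 := by
        rw [hu0] at hbound; push_cast at hbound; linarith
      have hFmem : F ∈ Iplus I := by
        refine mem_Iplus_of_closure ?_ hF1
        rw [hFdef]
        refine AddSubmonoid.sum_mem _ (fun i _ => ?_)
        have h1 : (n i : ℝ) * (q i : ℝ) * ff i = (n i * q i) • ff i := by
          rw [nsmul_eq_mul]; push_cast; ring
        rw [h1]
        exact nsmul_mem (Iplus_subset_closure (hff i)) _
      have hK : 0 < K := Nat.add_pos_left (Nat.mul_pos hP hk) _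
      exact Or.inl ⟨⟨M, K, F, hM, hK, hFmem, hxeq'⟩, hx1⟩
    · -- x = 1
      have hu1' : (1 : ℝ) ≤ (u : ℝ) := by exact_mod_cast hu1
      have hFK : F = 0 ∧ (K : ℝ) * c = 0 ∧ (u : ℝ) = 1 := by
        constructor
        · linarith
        constructor
        · linarith
        · linarith
      have hMx1 : (M : ℝ) * x = (M : ℝ) * 1 := by
        rw [mul_one, hMx]
        have h5 : (S : ℝ) - (P : ℝ) + 1 = (u : ℝ) := by rw [hu]; ring
        rw [h5, hFK.1, hFK.2.1, hFK.2.2]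
        ring
      exact Or.inr (mul_left_cancel₀ hM0 hMx1)
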